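/- Let f : M₁ × M₂ → N be a full non-degenerate A-bilinear map over a commutative unital ring A (with M₁, M₂, N faithful A-modules). Then f admits a largest enrichment: there is a commutative ring P(f) containing A with respect to which f is P(f)-bilinear, such that every ring P with respect to which f admits an enrichment embeds into P(f) compatibly. -/

import Mathlib

/-- An enrichment of an `A`-bilinear map `f : M₁ × M₂ → N` by a commutative ring `P ⊇ A`:
`P`-module structures on `M₁`, `M₂`, `N` (given by ring homomorphisms into the additive
endomorphism rings) extending the `A`-actions, keeping all three modules faithful and
making `f` `P`-bilinear. -/
structure BilinEnrichment (A : Type) [CommRing A]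
    (M₁ M₂ N : Type) [AddCommGroup M₁] [AddCommGroup M₂] [AddCommGroup N]
    [Module A M₁] [Module A M₂] [Module A N]
    (f : M₁ →ₗ[A] M₂ →ₗ[A] N) where
  P : Type
  [instP : CommRing P]
  ι : A →+* P
  ι_inj : Function.Injective ι
  e₁ : P →+* AddMonoid.End M₁
  e₂ : P →+* AddMonoid.End M₂
  e₀ : P →+* AddMonoid.End N
  e₁_inj : Function.Injective e₁
  e₂_inj : Function.Injective e₂
  e₀_inj : Function.Injective e₀
  compat₁ : ∀ (a : A) (x : M₁), e₁ (ι a) x = a • x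
  compat₂ : ∀ (a : A) (y : M₂), e₂ (ι a) y = a • y
  compat₀ : ∀ (a : A) (z : N), e₀ (ι a) z = a • z
  bilin₁ : ∀ (p : P) (x : M₁) (y : M₂), f (e₁ p x) y = e₀ p (f x y)
  bilin₂ : ∀ (p : P) (x : M₁) (y : M₂), f x (e₂ p y) = e₀ p (f x y)

attribute [instance] BilinEnrichment.instP

section Aux

variable {A : Type} [CommRing A]
    {M₁ M₂ N : Type} [AddCommGroup M₁] [AddCommGroup M₂] [AddCommGroup N]
    [Module A M₁] [Module A M₂] [Module A N]
    (f : M₁ →ₗ[A] M₂ →ₗ[A] N)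

/-- The carrier of the largest enrichment: triples of additive endomorphisms
compatible with `f`. -/
def bilinS : Subring (AddMonoid.End M₁ × AddMonoid.End M₂ × AddMonoid.End N) where
  carrier := {t | (∀ x y, f (t.1 x) y = t.2.2 (f x y)) ∧
      (∀ x y, f x (t.2.1 y) = t.2.2 (f x y))}
  one_mem' := ⟨fun _ _ => rfl, fun _ _ => rfl⟩
  zero_mem' := by
    constructor <;> intro x y <;>
      simp [AddMonoid.End.zero_apply]
  add_mem' := by
    rintro s t ⟨hs1, hs2⟩ ⟨ht1, ht2⟩
    constructor <;> intro x y
    · show f (s.1 x + t.1 x) y = s.2.2 (f x y) + t.2.2 (f x y)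
      rw [map_add, LinearMap.add_apply, hs1, ht1]
    · show f x (s.2.1 y + t.2.1 y) = s.2.2 (f x y) + t.2.2 (f x y)
      rw [map_add, hs2, ht2]
  neg_mem' := by
    rintro t ⟨ht1, ht2⟩
    constructor <;> intro x y
    · show f (-(t.1 x)) y = -(t.2.2 (f x y))
      rw [map_neg, LinearMap.neg_apply, ht1]
    · show f x (-(t.2.1 y)) = -(t.2.2 (f x y))
      rw [map_neg, ht2]
  mul_mem' := by
    rintro s t ⟨hs1, hs2⟩ ⟨ht1, ht2⟩
    constructor <;> intro x y
    · show f (s.1 (t.1 x)) y = s.2.2 (t.2.2 (f x y))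
      rw [hs1, ht1]
    · show f x (s.2.1 (t.2.1 y)) = s.2.2 (t.2.2 (f x y))
      rw [hs2, ht2]

/-- The third component of an element of `bilinS` commutes with the `A`-action. -/
theorem bilinS_smul (hfull : Submodule.span A (Set.range fun p : M₁ × M₂ => f p.1 p.2) = ⊤)
    {t : AddMonoid.End M₁ × AddMonoid.End M₂ × AddMonoid.End N}
    (ht : t ∈ bilinS f) (a : A) (n : N) : t.2.2 (a • n) = a • t.2.2 n := by
  have hmem : n ∈ Submodule.span A (Set.range fun p : M₁ × M₂ => f p.1 p.2) := by
    rw [hfull]; exact Submodule.mem_top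
  revert a
  induction hmem using Submodule.span_induction with
  | mem n hn =>
      obtain ⟨⟨x, y⟩, rfl⟩ := hn
      intro a
      show t.2.2 (a • f x y) = a • t.2.2 (f x y)
      have h1 : a • f x y = f (a • x) y := by
        rw [map_smul, LinearMap.smul_apply]
      rw [h1, ← ht.2, map_smul, LinearMap.smul_apply, ht.2]
  | zero => intro a; simp
  | add u v _ _ hu hv =>
      intro a
      rw [smul_add, map_add, hu, hv, map_add, smul_add]
  | smul b u _ hu =>
      intro a
      rw [smul_smul, hu, hu, smul_smul]

/-- The third components of elements of `bilinS` commute. -/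
theorem bilinS_comm₀ (hfull : Submodule.span A (Set.range fun p : M₁ × M₂ => f p.1 p.2) = ⊤)
    {s t : AddMonoid.End M₁ × AddMonoid.End M₂ × AddMonoid.End N}
    (hs : s ∈ bilinS f) (ht : t ∈ bilinS f) (n : N) :
    s.2.2 (t.2.2 n) = t.2.2 (s.2.2 n) := by
  have hmem : n ∈ Submodule.span A (Set.range fun p : M₁ × M₂ => f p.1 p.2) := by
    rw [hfull]; exact Submodule.mem_top
  induction hmem using Submodule.span_induction with
  | mem n hn =>
      obtain ⟨⟨x, y⟩, rfl⟩ := hn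
      show s.2.2 (t.2.2 (f x y)) = t.2.2 (s.2.2 (f x y))
      rw [← ht.1, ← hs.2, ht.1, hs.2]
  | zero => simp
  | add u v _ _ hu hv => rw [map_add, map_add, hu, hv, map_add, map_add]
  | smul b u _ hu =>
      rw [bilinS_smul f hfull ht, bilinS_smul f hfull hs, hu,
        bilinS_smul f hfull hs, bilinS_smul f hfull ht]

/-- If the third components of two elements of `bilinS` agree, the elements are equal. -/
theorem bilinS_eq_of_third (hnd₁ : ∀ x : M₁, (∀ y : M₂, f x y = 0) → x = 0)
    (hnd₂ : ∀ y : M₂, (∀ x : M₁, f x y = 0) → y = 0)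
    {s t : AddMonoid.End M₁ × AddMonoid.End M₂ × AddMonoid.End N}
    (hs : s ∈ bilinS f) (ht : t ∈ bilinS f) (h : s.2.2 = t.2.2) : s = t := by
  have h1 : s.1 = t.1 := by
    refine AddMonoidHom.ext fun x => ?_
    have := hnd₁ (s.1 x - t.1 x) (fun y => by
      rw [map_sub, LinearMap.sub_apply, hs.1, ht.1, h, sub_self])
    exact sub_eq_zero.mp this
  have h2 : s.2.1 = t.2.1 := by
    refine AddMonoidHom.ext fun y => ?_
    have := hnd₂ (s.2.1 y - t.2.1 y) (fun x => by
      rw [map_sub, hs.2, ht.2, h, sub_self])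
    exact sub_eq_zero.mp this
  exact Prod.ext h1 (Prod.ext h2 h)

end Aux

/-- a full non-degenerate bilinear map between faithful modules over a
commutative unital ring admits a largest enrichment: every enrichment embeds into it
compatibly. -/
theorem exists_largest_enrichment (A : Type) [CommRing A]
    (M₁ M₂ N : Type) [AddCommGroup M₁] [AddCommGroup M₂] [AddCommGroup N]
    [Module A M₁] [Module A M₂] [Module A N]
    [FaithfulSMul A M₁] [FaithfulSMul A M₂] [FaithfulSMul A N]
    (f : M₁ →ₗ[A] M₂ →ₗ[A] N)
    (hnd₁ : ∀ x : M₁, (∀ y : M₂, f x y = 0) → x = 0)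
    (hnd₂ : ∀ y : M₂, (∀ x : M₁, f x y = 0) → y = 0)
    (hfull : Submodule.span A (Set.range fun p : M₁ × M₂ => f p.1 p.2) = ⊤) :
    ∃ E : BilinEnrichment A M₁ M₂ N f, ∀ E' : BilinEnrichment A M₁ M₂ N f,
      ∃ j : E'.P →+* E.P, Function.Injective j ∧
        (∀ a : A, j (E'.ι a) = E.ι a) ∧
        (∀ (p : E'.P) (x : M₁), E.e₁ (j p) x = E'.e₁ p x) ∧
        (∀ (p : E'.P) (y : M₂), E.e₂ (j p) y = E'.e₂ p y) ∧
        (∀ (p : E'.P) (z : N), E.e₀ (j p) z = E'.e₀ p z) := by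
  classical
  -- the big ring
  set R := AddMonoid.End M₁ × AddMonoid.End M₂ × AddMonoid.End N with hR
  -- commutativity
  have mulcomm : ∀ s t : (bilinS f : Subring R), s * t = t * s := by
    rintro ⟨s, hs⟩ ⟨t, ht⟩
    apply Subtype.ext
    apply bilinS_eq_of_third f hnd₁ hnd₂ (mul_mem hs ht) (mul_mem ht hs)
    refine AddMonoidHom.ext fun n => ?_
    exact bilinS_comm₀ f hfull hs ht n
  letI instP : CommRing (bilinS f : Subring R) :=
    { Subring.toRing (bilinS f) with mul_comm := mulcomm }
  -- the structural ring hom from A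
  have hιmem : ∀ a : A,
      ((Module.toAddMonoidEnd A M₁ a, Module.toAddMonoidEnd A M₂ a,
        Module.toAddMonoidEnd A N a) : R) ∈ bilinS f := by
    intro a
    constructor <;> intro x y
    · show f (a • x) y = a • f x y
      rw [map_smul, LinearMap.smul_apply]
    · show f x (a • y) = a • f x y
      rw [map_smul]
  let ιS : A →+* (bilinS f : Subring R) :=
    RingHom.codRestrict
      ((Module.toAddMonoidEnd A M₁).prod
        ((Module.toAddMonoidEnd A M₂).prod (Module.toAddMonoidEnd A N))) _ hιmem
  let E : BilinEnrichment A M₁ M₂ N f :=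
    { P := (bilinS f : Subring R)
      instP := instP
      ι := ιS
      ι_inj := by
        intro a b h
        have h1 : (ιS a : R).1 = (ιS b : R).1 := by rw [h]
        have h2 : ∀ x : M₁, a • x = b • x :=
          fun x => congrArg (fun (g : AddMonoid.End M₁) => g x) h1
        exact eq_of_smul_eq_smul h2
      e₁ := (RingHom.fst _ _).comp (bilinS f).subtype
      e₂ := (RingHom.fst _ _).comp ((RingHom.snd _ _).comp (bilinS f).subtype)
      e₀ := (RingHom.snd _ _).comp ((RingHom.snd _ _).comp (bilinS f).subtype)
      e₁_inj := by
        intro p q h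
        apply Subtype.ext
        apply bilinS_eq_of_third f hnd₁ hnd₂ p.2 q.2
        refine AddMonoidHom.ext fun n => ?_
        have hmem : n ∈ Submodule.span A (Set.range fun p : M₁ × M₂ => f p.1 p.2) := by
          rw [hfull]; exact Submodule.mem_top
        induction hmem using Submodule.span_induction with
        | mem n hn =>
            obtain ⟨⟨x, y⟩, rfl⟩ := hn
            show (p : R).2.2 (f x y) = (q : R).2.2 (f x y)
            rw [← p.2.1, ← q.2.1]
            have : (p : R).1 = (q : R).1 := h
            rw [this]
        | zero =>
            show (p : R).2.2 0 = (q : R).2.2 0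
            simp
        | add u v _ _ hu hv =>
            show (p : R).2.2 (u + v) = (q : R).2.2 (u + v)
            rw [map_add, map_add]
            exact congrArg₂ (· + ·) hu hv
        | smul b u _ hu =>
            show (p : R).2.2 (b • u) = (q : R).2.2 (b • u)
            rw [bilinS_smul f hfull p.2, bilinS_smul f hfull q.2]
            exact congrArg (b • ·) hu
      e₂_inj := by
        intro p q h
        apply Subtype.ext
        apply bilinS_eq_of_third f hnd₁ hnd₂ p.2 q.2
        refine AddMonoidHom.ext fun n => ?_
        have hmem : n ∈ Submodule.span A (Set.range fun p : M₁ × M₂ => f p.1 p.2) := by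
          rw [hfull]; exact Submodule.mem_top
        induction hmem using Submodule.span_induction with
        | mem n hn =>
            obtain ⟨⟨x, y⟩, rfl⟩ := hn
            show (p : R).2.2 (f x y) = (q : R).2.2 (f x y)
            rw [← p.2.2, ← q.2.2]
            have : (p : R).2.1 = (q : R).2.1 := h
            rw [this]
        | zero =>
            show (p : R).2.2 0 = (q : R).2.2 0
            simp
        | add u v _ _ hu hv =>
            show (p : R).2.2 (u + v) = (q : R).2.2 (u + v)
            rw [map_add, map_add]
            exact congrArg₂ (· + ·) hu hv
        | smul b u _ hu =>
            show (p : R).2.2 (b • u) = (q : R).2.2 (b • u)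
            rw [bilinS_smul f hfull p.2, bilinS_smul f hfull q.2]
            exact congrArg (b • ·) hu
      e₀_inj := by
        intro p q h
        exact Subtype.ext (bilinS_eq_of_third f hnd₁ hnd₂ p.2 q.2 h)
      compat₁ := fun a x => rfl
      compat₂ := fun a y => rfl
      compat₀ := fun a z => rfl
      bilin₁ := fun p x y => p.2.1 x y
      bilin₂ := fun p x y => p.2.2 x y }
  refine ⟨E, fun E' => ?_⟩
  have hjmem : ∀ p : E'.P, ((E'.e₁ p, E'.e₂ p, E'.e₀ p) : R) ∈ bilinS f :=
    fun p => ⟨E'.bilin₁ p, E'.bilin₂ p⟩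
  let j : E'.P →+* (bilinS f : Subring R) :=
    RingHom.codRestrict ((E'.e₁).prod ((E'.e₂).prod (E'.e₀))) _ hjmem
  refine ⟨j, ?_, ?_, fun p x => rfl, fun p y => rfl, fun p z => rfl⟩
  · intro p q h
    apply E'.e₀_inj
    have : (j p : R).2.2 = (j q : R).2.2 := by rw [h]
    exact this
  · intro a
    apply Subtype.ext
    refine Prod.ext ?_ (Prod.ext ?_ ?_)
    · exact AddMonoidHom.ext fun x => E'.compat₁ a x
    · exact AddMonoidHom.ext fun y => E'.compat₂ a y
    · exact AddMonoidHom.ext fun z => E'.compat₀ a z
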